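/- Let α be a peak composition of n and let T be a standard immaculate tableau of shape α. Then T satisfies the peak-tableau condition if and only if the subfilling of T consisting of its first two columns is canonical, i.e. its entries strictly increase when read row by row from bottom to top and left to right within each row (equivalently, T_{1,j} < T_{2,j} whenever row j has at least two boxes, and T_{2,j} < T_{1,j+1} for every 1 ≤ j ≤ ℓ(α)−1). -/

import Mathlib

namespace PaperSPIT

/-- The `j`-th part (1-indexed) of a composition presented as a list. -/
def part (α : List ℕ) (j : ℕ) : ℕ := α.getD (j - 1) 0

/-- The largest part. -/
def maxPart (α : List ℕ) : ℕ := α.foldr max 0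

/-- The composition diagram: boxes `(i, j)` (column `i`, row `j`), both 1-indexed,
rows numbered from bottom to top. -/
def cd (α : List ℕ) : Finset (ℕ × ℕ) :=
  (Finset.Icc 1 (maxPart α) ×ˢ Finset.Icc 1 α.length).filter fun p => p.1 ≤ part α p.2

/-- `α` is a composition of `n`. -/
def IsComposition (n : ℕ) (α : List ℕ) : Prop :=
  (∀ a ∈ α, 0 < a) ∧ α.sum = n

/-- `α` is a peak composition of `n`: all parts except possibly the last are `> 1`. -/
def IsPeakComposition (n : ℕ) (α : List ℕ) : Prop :=
  IsComposition n α ∧ ∀ i, i + 1 < α.length → 1 < α.getD i 0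

/-- A standard filling of `cd α`: a bijection from the boxes onto `{1, …, n}`
(normalized to be `0` off the diagram). -/
def IsStandardFilling (α : List ℕ) (T : ℕ × ℕ → ℕ) : Prop :=
  Set.BijOn T (cd α : Set (ℕ × ℕ)) (Set.Icc 1 α.sum) ∧
  ∀ p : ℕ × ℕ, p ∉ cd α → T p = 0

def RowsIncrease (α : List ℕ) (T : ℕ × ℕ → ℕ) : Prop :=
  ∀ i j : ℕ, (i, j) ∈ cd α → (i + 1, j) ∈ cd α → T (i, j) < T (i + 1, j)

def RowsWeaklyIncrease (α : List ℕ) (T : ℕ × ℕ → ℕ) : Prop :=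
  ∀ i j : ℕ, (i, j) ∈ cd α → (i + 1, j) ∈ cd α → T (i, j) ≤ T (i + 1, j)

def FirstColIncreases (α : List ℕ) (T : ℕ × ℕ → ℕ) : Prop :=
  ∀ j : ℕ, (1, j) ∈ cd α → (1, j + 1) ∈ cd α → T (1, j) < T (1, j + 1)

/-- Standard immaculate tableau. -/
def IsSIT (α : List ℕ) (T : ℕ × ℕ → ℕ) : Prop :=
  IsStandardFilling α T ∧ RowsIncrease α T ∧ FirstColIncreases α T

/-- Peak-tableau condition: for every `1 ≤ k ≤ n` the boxes with entries `≤ k`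
form the diagram of a peak composition. -/
def PeakCond (α : List ℕ) (T : ℕ × ℕ → ℕ) : Prop :=
  ∀ k : ℕ, 1 ≤ k → k ≤ α.sum → ∃ β : List ℕ,
    IsPeakComposition k β ∧ (cd α).filter (fun p => T p ≤ k) = cd β

/-- Standard peak immaculate tableau. -/
def IsSPIT (α : List ℕ) (T : ℕ × ℕ → ℕ) : Prop := IsSIT α T ∧ PeakCond α T

def SPITset (α : List ℕ) : Set (ℕ × ℕ → ℕ) := {T | IsSPIT α T}

/-- The Young triple condition. -/
def YoungTriple (α : List ℕ) (T : ℕ × ℕ → ℕ) : Prop :=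
  ∀ k i j : ℕ, i < j → (k, j) ∈ cd α → (k + 1, i) ∈ cd α → T (k, j) ≤ T (k + 1, i) →
    (k + 1, j) ∈ cd α ∧ T (k + 1, j) < T (k + 1, i)

/-- Standard Young composition tableau. -/
def IsSYCT (α : List ℕ) (T : ℕ × ℕ → ℕ) : Prop :=
  IsStandardFilling α T ∧ RowsIncrease α T ∧ FirstColIncreases α T ∧ YoungTriple α T

def SYCTset (α : List ℕ) : Set (ℕ × ℕ → ℕ) := {T | IsSYCT α T}

/-- Standard peak Young composition tableau. -/
def IsSPYCT (α : List ℕ) (T : ℕ × ℕ → ℕ) : Prop := IsSYCT α T ∧ PeakCond α T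

def SPYCTset (α : List ℕ) : Set (ℕ × ℕ → ℕ) := {T | IsSPYCT α T}

/-- Row reading word `w_r`: rows from top to bottom, each row left to right. -/
def wR (α : List ℕ) (T : ℕ × ℕ → ℕ) : List ℕ :=
  ((List.range α.length).reverse.map fun j =>
    (List.range (part α (j + 1))).map fun i => T (i + 1, j + 1)).flatten

/-- The `i`-th column of a filling, read bottom to top. -/
def colList (α : List ℕ) (T : ℕ × ℕ → ℕ) (i : ℕ) : List ℕ :=
  ((List.range α.length).filter fun j => decide (i ≤ part α (j + 1))).map
    fun j => T (i, j + 1)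

/-- Column reading word `w_c`: columns left to right, each column bottom to top. -/
def wC (α : List ℕ) (T : ℕ × ℕ → ℕ) : List ℕ :=
  ((List.range (maxPart α)).map fun i => colList α T (i + 1)).flatten

/-- Young reading word `w_Y`: first column top to bottom, then subsequent columns
bottom to top, columns left to right. -/
def wY (α : List ℕ) (T : ℕ × ℕ → ℕ) : List ℕ :=
  (colList α T 1).reverse ++
    ((List.range (maxPart α - 1)).map fun i => colList α T (i + 2)).flatten

/-- Descent set of a word with distinct letters: `i` such that `i` and `i+1` occur
and `i` occurs to the right of `i+1`. -/
def DesWord (w : List ℕ) : Finset ℕ :=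
  w.toFinset.filter fun i => (i + 1) ∈ w ∧ w.idxOf (i + 1) < w.idxOf i


section Aux

lemma le_maxPart {γ : List ℕ} {a : ℕ} (h : a ∈ γ) : a ≤ maxPart γ := by
  induction γ with
  | nil => simp at h
  | cons b l ih =>
    simp only [List.mem_cons] at h
    simp only [maxPart, List.foldr_cons]
    rcases h with rfl | h
    · exact le_max_left _ _
    · exact le_trans (ih h) (le_max_right _ _)

lemma part_mem {γ : List ℕ} {j : ℕ} (h1 : 1 ≤ j) (h2 : j ≤ γ.length) : part γ j ∈ γ := by
  have h : j - 1 < γ.length := by omega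
  rw [part, List.getD_eq_getElem _ _ h]
  exact List.getElem_mem _

lemma mem_cd {γ : List ℕ} {i j : ℕ} :
    (i, j) ∈ cd γ ↔ 1 ≤ i ∧ 1 ≤ j ∧ j ≤ γ.length ∧ i ≤ part γ j := by
  simp only [cd, Finset.mem_filter, Finset.mem_product, Finset.mem_Icc]
  constructor
  · rintro ⟨⟨⟨hi1, _⟩, hj1, hjL⟩, hip⟩; exact ⟨hi1, hj1, hjL, hip⟩
  · rintro ⟨hi1, hj1, hjL, hip⟩
    exact ⟨⟨⟨hi1, hip.trans (le_maxPart (part_mem hj1 hjL))⟩, hj1, hjL⟩, hip⟩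

lemma downclosed_eq_Icc (S : Finset ℕ) (h0 : 0 ∉ S)
    (hdc : ∀ i j : ℕ, 1 ≤ i → i ≤ j → j ∈ S → i ∈ S) : S = Finset.Icc 1 S.card := by
  ext i
  simp only [Finset.mem_Icc]
  constructor
  · intro hi
    have hi1 : 1 ≤ i := by
      rcases Nat.eq_zero_or_pos i with h | h
      · exact absurd (h ▸ hi) h0
      · exact h
    refine ⟨hi1, ?_⟩
    have hsub : Finset.Icc 1 i ⊆ S := by
      intro x hx
      simp only [Finset.mem_Icc] at hx
      exact hdc x i hx.1 hx.2 hi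
    calc i = (Finset.Icc 1 i).card := by simp
    _ ≤ S.card := Finset.card_le_card hsub
  · rintro ⟨hi1, hic⟩
    by_contra hiS
    have hsub : S ⊆ Finset.Icc 1 (i - 1) := by
      intro x hx
      simp only [Finset.mem_Icc]
      have hx1 : 1 ≤ x := by
        rcases Nat.eq_zero_or_pos x with h | h
        · exact absurd (h ▸ hx) h0
        · exact h
      refine ⟨hx1, ?_⟩
      by_contra h
      exact hiS (hdc i x hi1 (by omega) hx)
    have hle := Finset.card_le_card hsub
    simp only [Nat.card_Icc] at hle
    omega

lemma sum_getD (γ : List ℕ) : ∑ j ∈ Finset.range γ.length, γ.getD j 0 = γ.sum := by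
  induction γ with
  | nil => simp
  | cons a l ih =>
    rw [List.length_cons, Finset.sum_range_succ']
    simp only [List.getD_cons_succ, List.getD_cons_zero, List.sum_cons, ih]
    omega

lemma card_cd (γ : List ℕ) : (cd γ).card = γ.sum := by
  have h : cd γ = (Finset.Icc 1 γ.length).biUnion
      (fun j => (Finset.Icc 1 (part γ j)).image (fun i => (i, j))) := by
    ext ⟨i, j⟩
    simp only [mem_cd, Finset.mem_biUnion, Finset.mem_image, Finset.mem_Icc]
    constructor
    · rintro ⟨hi1, hj1, hjL, hip⟩; exact ⟨j, ⟨hj1, hjL⟩, i, ⟨hi1, hip⟩, rfl⟩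
    · rintro ⟨j', ⟨hj1, hjL⟩, i', ⟨hi1, hip⟩, heq⟩
      obtain ⟨rfl, rfl⟩ : i' = i ∧ j' = j := by simpa [Prod.ext_iff] using heq
      exact ⟨hi1, hj1, hjL, hip⟩
  rw [h, Finset.card_biUnion]
  · have hc : ∀ j ∈ Finset.Icc 1 γ.length,
        ((Finset.Icc 1 (part γ j)).image (fun i => (i, j))).card = part γ j := by
      intro j _
      have hinj : Function.Injective (fun i => ((i, j) : ℕ × ℕ)) := by
        intro a b hab; simpa using hab
      rw [Finset.card_image_of_injective _ hinj]
      simp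
    rw [Finset.sum_congr rfl hc, ← Finset.Ico_add_one_right_eq_Icc, Finset.sum_Ico_eq_sum_range]
    have : ∀ i ∈ Finset.range (γ.length + 1 - 1), part γ (1 + i) = γ.getD i 0 := by
      intro i _
      simp [part]
    rw [Finset.sum_congr rfl this]
    simpa using sum_getD γ
  · intro j hj j' hj' hne
    simp only [Finset.disjoint_left, Finset.mem_image]
    rintro p ⟨a, _, rfl⟩ ⟨b, _, hb⟩
    have : b = a ∧ j' = j := by simpa [Prod.ext_iff] using hb
    exact hne this.2.symm

variable {α : List ℕ} {T : ℕ × ℕ → ℕ}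

lemma row_mono (hrow : RowsIncrease α T) {i i' j : ℕ}
    (h' : (i', j) ∈ cd α) (hi1 : 1 ≤ i) (hii : i ≤ i') : T (i, j) ≤ T (i', j) := by
  induction i' with
  | zero => omega
  | succ i' ih =>
    rcases Nat.lt_or_ge i (i' + 1) with hlt | hge
    · have hmem : (i', j) ∈ cd α := by
        rw [mem_cd] at h' ⊢
        exact ⟨by omega, h'.2.1, h'.2.2.1, by omega⟩
      exact le_trans (ih hmem (by omega)) (le_of_lt (hrow i' j hmem h'))
    · have heq : i = i' + 1 := by omega
      rw [heq]

lemma one_mem_cd (hpos : ∀ a ∈ α, 0 < a) {j : ℕ} (hj1 : 1 ≤ j) (hjL : j ≤ α.length) :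
    (1, j) ∈ cd α := mem_cd.mpr ⟨le_refl 1, hj1, hjL, hpos _ (part_mem hj1 hjL)⟩

lemma col_mono_lt (hpos : ∀ a ∈ α, 0 < a) (hcol : FirstColIncreases α T) {j j' : ℕ}
    (hj1 : 1 ≤ j) (hjL : j' ≤ α.length) (hjj : j < j') : T (1, j) < T (1, j') := by
  induction j' with
  | zero => omega
  | succ j' ih =>
    rcases Nat.lt_or_ge j j' with hlt | hge
    · exact lt_trans (ih (by omega) hlt)
        (hcol j' (one_mem_cd hpos (by omega) (by omega)) (one_mem_cd hpos (by omega) hjL))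
    · have heq : j = j' := by omega
      subst heq
      exact hcol j (one_mem_cd hpos hj1 (by omega)) (one_mem_cd hpos (by omega) hjL)

lemma col_mono_le (hpos : ∀ a ∈ α, 0 < a) (hcol : FirstColIncreases α T) {j j' : ℕ}
    (hj1 : 1 ≤ j) (hjL : j' ≤ α.length) (hjj : j ≤ j') : T (1, j) ≤ T (1, j') := by
  rcases Nat.lt_or_ge j j' with h | h
  · exact le_of_lt (col_mono_lt hpos hcol hj1 hjL h)
  · have : j = j' := by omega
    rw [this]

lemma T11_le (hT : IsSIT α T) (hpos : ∀ a ∈ α, 0 < a) {k : ℕ}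
    (hk1 : 1 ≤ k) (hkn : k ≤ α.sum) : T (1, 1) ≤ k := by
  obtain ⟨⟨hbij, _⟩, hrow, hcol⟩ := hT
  obtain ⟨p, hp, hTp⟩ := hbij.surjOn (Set.mem_Icc.mpr ⟨le_refl 1, hk1.trans hkn⟩ :
    (1 : ℕ) ∈ Set.Icc 1 α.sum)
  obtain ⟨i, j⟩ := p
  have hpc : (i, j) ∈ cd α := by simpa using hp
  rw [mem_cd] at hpc
  calc T (1, 1) ≤ T (1, j) :=
        col_mono_le hpos hcol (le_refl 1) hpc.2.2.1 hpc.2.1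
  _ ≤ T (i, j) := row_mono hrow (mem_cd.mpr hpc) (le_refl 1) hpc.1
  _ = 1 := hTp
  _ ≤ k := hk1

end Aux

/-- For a peak composition `α` of `n` and a standard immaculate tableau `T`
of shape `α`, the peak-tableau condition holds iff the first two columns of `T` are canonical:
`T (1,j) < T (2,j)` whenever row `j` has at least two boxes, and `T (2,j) < T (1,j+1)` for
every `1 ≤ j ≤ ℓ(α) − 1`. -/
theorem peakCond_iff_canonical (n : ℕ) (α : List ℕ) (hα : IsPeakComposition n α)
    (T : ℕ × ℕ → ℕ) (hT : IsSIT α T) :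
    PeakCond α T ↔
      ((∀ j : ℕ, (2, j) ∈ cd α → T (1, j) < T (2, j)) ∧
       (∀ j : ℕ, 1 ≤ j → j + 1 ≤ α.length → T (2, j) < T (1, j + 1))) := by
  obtain ⟨⟨hpos, hsum⟩, hpeak⟩ := hα
  obtain ⟨⟨hbij, hzero⟩, hrow, hcol⟩ := hT
  constructor
  · -- PeakCond → canonical
    intro hp
    constructor
    · intro j h2j
      have h1j : (1, j) ∈ cd α := by
        rw [mem_cd] at h2j ⊢
        exact ⟨le_refl 1, h2j.2.1, h2j.2.2.1, by omega⟩
      exact hrow 1 j h1j h2j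
    · intro j hj1 hjL
      have hmem1 : (1, j + 1) ∈ cd α := one_mem_cd hpos (by omega) hjL
      have hmem2 : (2, j) ∈ cd α := by
        rw [mem_cd]
        refine ⟨by omega, hj1, by omega, ?_⟩
        have h2 := hpeak (j - 1) (by omega)
        have hjj : j - 1 + 1 = j := by omega
        simp only [part]
        omega
      have hkIcc := hbij.mapsTo (Finset.mem_coe.mpr hmem1)
      rw [Set.mem_Icc] at hkIcc
      obtain ⟨β, ⟨⟨hβpos, hβsum⟩, hβpeak⟩, hcdβ⟩ := hp (T (1, j + 1)) hkIcc.1 hkIcc.2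
      have h1β : (1, j + 1) ∈ cd β := by
        rw [← hcdβ, Finset.mem_filter]
        exact ⟨hmem1, le_refl _⟩
      have hjβ : j + 1 ≤ β.length := (mem_cd.mp h1β).2.2.1
      have h2β : (2, j) ∈ cd β := by
        rw [mem_cd]
        refine ⟨by omega, hj1, by omega, ?_⟩
        have h2 := hβpeak (j - 1) (by omega)
        have hjj : j - 1 + 1 = j := by omega
        simp only [part]
        omega
      have hTle : T (2, j) ≤ T (1, j + 1) := by
        rw [← hcdβ] at h2β
        exact (Finset.mem_filter.mp h2β).2
      have hne : T (2, j) ≠ T (1, j + 1) := by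
        intro h
        have := hbij.injOn (Finset.mem_coe.mpr hmem2) (Finset.mem_coe.mpr hmem1) h
        simp at this
      omega
  · -- canonical → PeakCond
    rintro ⟨hcan1, hcan2⟩ k hk1 hkn
    have hL1 : 1 ≤ α.length := by
      by_contra h
      have h0 : α.length = 0 := by omega
      rw [List.length_eq_zero_iff] at h0
      subst h0
      simp at hkn
      omega
    set c : ℕ → ℕ := fun j => ((Finset.Icc 1 (part α j)).filter fun i => T (i, j) ≤ k).card
      with hc
    have hrowset : ∀ j, 1 ≤ j → j ≤ α.length →
        (Finset.Icc 1 (part α j)).filter (fun i => T (i, j) ≤ k) = Finset.Icc 1 (c j) := by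
      intro j hj1 hjL
      exact downclosed_eq_Icc _ (by simp) (by
        intro i i' hi1 hii hiS
        simp only [Finset.mem_filter, Finset.mem_Icc] at hiS ⊢
        refine ⟨⟨hi1, le_trans hii hiS.1.2⟩, ?_⟩
        exact le_trans
          (row_mono hrow (mem_cd.mpr ⟨hiS.1.1, hj1, hjL, hiS.1.2⟩) hi1 hii) hiS.2)
    set M : Finset ℕ := (Finset.Icc 1 α.length).filter (fun j => T (1, j) ≤ k) with hMdef
    set m := M.card with hmdef
    have hM : M = Finset.Icc 1 m := downclosed_eq_Icc _ (by simp [hMdef]) (by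
      intro j j' hj1 hjj hjS
      simp only [hMdef, Finset.mem_filter, Finset.mem_Icc] at hjS ⊢
      exact ⟨⟨hj1, le_trans hjj hjS.1.2⟩,
        le_trans (col_mono_le hpos hcol hj1 hjS.1.2 hjj) hjS.2⟩)
    have h1M : 1 ∈ M := by
      simp only [hMdef, Finset.mem_filter, Finset.mem_Icc]
      exact ⟨⟨le_refl 1, hL1⟩, T11_le ⟨⟨hbij, hzero⟩, hrow, hcol⟩ hpos hk1 hkn⟩
    have hm1 : 1 ≤ m := by
      rw [hM] at h1M
      exact (Finset.mem_Icc.mp h1M).2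
    have hmL : m ≤ α.length := by
      have hmm : m ∈ M := by
        rw [hM]
        exact Finset.mem_Icc.mpr ⟨hm1, le_refl m⟩
      simp only [hMdef, Finset.mem_filter, Finset.mem_Icc] at hmm
      exact hmm.1.2
    have hMiff : ∀ j, 1 ≤ j → j ≤ α.length → (T (1, j) ≤ k ↔ j ≤ m) := by
      intro j hj1 hjL
      constructor
      · intro h
        have hjM : j ∈ M := by
          simp only [hMdef, Finset.mem_filter, Finset.mem_Icc]
          exact ⟨⟨hj1, hjL⟩, h⟩
        rw [hM] at hjM
        exact (Finset.mem_Icc.mp hjM).2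
      · intro h
        have hjM : j ∈ M := by
          rw [hM]
          exact Finset.mem_Icc.mpr ⟨hj1, h⟩
        exact (Finset.mem_filter.mp hjM).2
    set β := (List.range m).map (fun j => c (j + 1)) with hβ
    have hβlen : β.length = m := by simp [hβ]
    have hβpart : ∀ j, 1 ≤ j → j ≤ m → part β j = c j := by
      intro j hj1 hjm
      have hlt : j - 1 < β.length := by omega
      rw [part, List.getD_eq_getElem _ _ hlt]
      simp only [hβ, List.getElem_map, List.getElem_range]
      congr 1
      omega
    have hSk : (cd α).filter (fun p => T p ≤ k) = cd β := by
      ext ⟨i, j⟩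
      simp only [Finset.mem_filter, mem_cd]
      constructor
      · rintro ⟨⟨hi1, hj1, hjL, hip⟩, hTk⟩
        have hjm : j ≤ m := (hMiff j hj1 hjL).1
          (le_trans (row_mono hrow (mem_cd.mpr ⟨hi1, hj1, hjL, hip⟩) (le_refl 1) hi1) hTk)
        have hicj : i ≤ c j := by
          have hiI : i ∈ Finset.Icc 1 (c j) := by
            rw [← hrowset j hj1 hjL]
            simp only [Finset.mem_filter, Finset.mem_Icc]
            exact ⟨⟨hi1, hip⟩, hTk⟩
          exact (Finset.mem_Icc.mp hiI).2
        exact ⟨hi1, hj1, by rw [hβlen]; exact hjm, by rw [hβpart j hj1 hjm]; exact hicj⟩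
      · rintro ⟨hi1, hj1, hjβ, hip⟩
        rw [hβlen] at hjβ
        rw [hβpart j hj1 hjβ] at hip
        have hiF : i ∈ (Finset.Icc 1 (part α j)).filter (fun i => T (i, j) ≤ k) := by
          rw [hrowset j hj1 (le_trans hjβ hmL)]
          exact Finset.mem_Icc.mpr ⟨hi1, hip⟩
        simp only [Finset.mem_filter, Finset.mem_Icc] at hiF
        exact ⟨⟨hi1, hj1, le_trans hjβ hmL, hiF.1.2⟩, hiF.2⟩
    have hcard : ((cd α).filter fun p => T p ≤ k).card = (Finset.Icc 1 k).card := by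
      apply Finset.card_bij (fun p _ => T p)
      · intro p hp
        simp only [Finset.mem_filter] at hp
        have hTp := hbij.mapsTo (Finset.mem_coe.mpr hp.1)
        rw [Set.mem_Icc] at hTp
        exact Finset.mem_Icc.mpr ⟨hTp.1, hp.2⟩
      · intro p hp q hq h
        simp only [Finset.mem_filter] at hp hq
        exact hbij.injOn (Finset.mem_coe.mpr hp.1) (Finset.mem_coe.mpr hq.1) h
      · intro v hv
        rw [Finset.mem_Icc] at hv
        obtain ⟨p, hp, hTp⟩ :=
          hbij.surjOn (Set.mem_Icc.mpr ⟨hv.1, le_trans hv.2 hkn⟩)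
        exact ⟨p, Finset.mem_filter.mpr ⟨Finset.mem_coe.mp hp, by rw [hTp]; exact hv.2⟩, hTp⟩
    have hβsum : β.sum = k := by
      have h1 := card_cd β
      rw [← hSk] at h1
      rw [← h1, hcard, Nat.card_Icc]
      omega
    have hβposlem : ∀ a ∈ β, 0 < a := by
      intro a ha
      simp only [hβ, List.mem_map, List.mem_range] at ha
      obtain ⟨j, hj, rfl⟩ := ha
      have hT1 : T (1, j + 1) ≤ k := (hMiff (j + 1) (by omega) (by omega)).2 (by omega)
      have h1I : (1 : ℕ) ∈ Finset.Icc 1 (c (j + 1)) := by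
        rw [← hrowset (j + 1) (by omega) (by omega)]
        simp only [Finset.mem_filter, Finset.mem_Icc]
        exact ⟨⟨le_refl 1, hpos _ (part_mem (by omega) (by omega))⟩, hT1⟩
      have := (Finset.mem_Icc.mp h1I).2
      omega
    have hβpeaklem : ∀ i, i + 1 < β.length → 1 < β.getD i 0 := by
      intro i hi
      rw [hβlen] at hi
      have hgd : β.getD i 0 = part β (i + 1) := by simp [part]
      rw [hgd, hβpart (i + 1) (by omega) (by omega)]
      have hT2 : T (2, i + 1) < T (1, i + 2) := hcan2 (i + 1) (by omega) (by omega)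
      have hT1 : T (1, i + 2) ≤ k := (hMiff (i + 2) (by omega) (by omega)).2 (by omega)
      have h2I : (2 : ℕ) ∈ Finset.Icc 1 (c (i + 1)) := by
        rw [← hrowset (i + 1) (by omega) (by omega)]
        simp only [Finset.mem_filter, Finset.mem_Icc]
        refine ⟨⟨by omega, ?_⟩, by omega⟩
        have hgt := hpeak i (by omega)
        simp only [part, Nat.add_sub_cancel]
        omega
      have := (Finset.mem_Icc.mp h2I).2
      omega
    exact ⟨β, ⟨⟨hβposlem, hβsum⟩, hβpeaklem⟩, hSk⟩

end PaperSPIT
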